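/- arXiv:2103.05859 — 3 statements merged into one kernel-verified Lean document; each statement's English description precedes it below -/
import Mathlib

section
/- Let R be a finite commutative ring and C ⊆ Rᵐ × Rⁿ a double cyclic code of length (m, n), i.e., an R-submodule closed under the simultaneous cyclic shift T(c¹₀,…,c¹_{m-1} | c²₀,…,c²_{n-1}) = (c¹_{m-1},c¹₀,…,c¹_{m-2} | c²_{n-1},c²₀,…,c²_{n-2}). Then the dual code C^⊥ = { d ∈ Rᵐ × Rⁿ : ⟨d, c⟩ = 0 for all c ∈ C } is also closed under T, hence is a double cyclic code of length (m, n). -/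
lemma finRotate_pow_self (m : ℕ) : (finRotate m) ^ m = 1 := by
  match m with
  | 0 => exact Subsingleton.elim _ _
  | 1 => exact Subsingleton.elim _ _
  | (k+2) =>
    have h : orderOf (finRotate (k+2)) = k + 2 := by
      rw [Equiv.Perm.IsCycle.orderOf isCycle_finRotate, support_finRotate,
        Finset.card_univ, Fintype.card_fin]
    have h2 := pow_orderOf_eq_one (finRotate (k+2))
    rwa [h] at h2

lemma symm_iterate_eq_id (m L : ℕ) (h : m ∣ L) :
    ∀ i : Fin m, ((finRotate m).symm)^[L] i = i := by
  intro i
  have : ((finRotate m).symm)^[L] = ⇑((finRotate m)⁻¹ ^ L) := by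
    rw [← Equiv.Perm.iterate_eq_pow]; rfl
  rw [this]
  obtain ⟨k, rfl⟩ := h
  rw [inv_pow, pow_mul, finRotate_pow_self, one_pow, inv_one]
  rfl

theorem dual_of_double_cyclic_is_double_cyclic
    (R : Type*) [CommRing R] [Fintype R] (m n : ℕ) (hm : 1 ≤ m) (hn : 1 ≤ n)
    (T : ((Fin m → R) × (Fin n → R)) → ((Fin m → R) × (Fin n → R)))
    (hT : ∀ c, T c = (c.1 ∘ (finRotate m).symm, c.2 ∘ (finRotate n).symm))
    (C : Submodule R ((Fin m → R) × (Fin n → R)))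
    (hC : ∀ c ∈ C, T c ∈ C)
    (d : (Fin m → R) × (Fin n → R))
    (hd : ∀ c ∈ C, (∑ i, d.1 i * c.1 i) + (∑ j, d.2 j * c.2 j) = 0) :
    ∀ c ∈ C, (∑ i, (T d).1 i * c.1 i) + (∑ j, (T d).2 j * c.2 j) = 0 := by
  intro c hc
  -- the "inverse shift"
  set c' : (Fin m → R) × (Fin n → R) := (c.1 ∘ ⇑(finRotate m), c.2 ∘ ⇑(finRotate n)) with hc'
  -- iterates of T
  have hiter : ∀ k (x : (Fin m → R) × (Fin n → R)),
      T^[k] x = (x.1 ∘ ((finRotate m).symm : Fin m → Fin m)^[k],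
                 x.2 ∘ ((finRotate n).symm : Fin n → Fin n)^[k]) := by
    intro k
    induction k with
    | zero => intro x; rfl
    | succ k ih =>
      intro x
      rw [Function.iterate_succ_apply', ih, hT]
      refine Prod.ext ?_ ?_ <;>
        simp [Function.comp_assoc, ← Function.iterate_succ_apply',
          Function.iterate_succ_apply]
  have hiterC : ∀ k, T^[k] c ∈ C := by
    intro k
    induction k with
    | zero => exact hc
    | succ k ih => rw [Function.iterate_succ_apply']; exact hC _ ih
  set L := Nat.lcm m n with hL
  have hL1 : 1 ≤ L := Nat.one_le_iff_ne_zero.mpr (Nat.lcm_ne_zero (by omega) (by omega))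
  have hLm : m ∣ L := Nat.dvd_lcm_left m n
  have hLn : n ∣ L := Nat.dvd_lcm_right m n
  have hc'eq : c' = T^[L-1] c := by
    rw [hiter]
    refine Prod.ext ?_ ?_
    · funext i
      have h1 : (finRotate m).symm (((finRotate m).symm)^[L-1] i) = i := by
        rw [← Function.iterate_succ_apply' (finRotate m).symm, Nat.succ_eq_add_one,
          Nat.sub_add_cancel hL1]
        exact symm_iterate_eq_id m L hLm i
      have h2 : ((finRotate m).symm)^[L-1] i = finRotate m i :=
        (finRotate m).symm.injective (by rw [h1, Equiv.symm_apply_apply])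
      show c.1 ((finRotate m) i) = c.1 (((finRotate m).symm : Fin m → Fin m)^[L-1] i)
      rw [h2]
    · funext j
      have h1 : (finRotate n).symm (((finRotate n).symm)^[L-1] j) = j := by
        rw [← Function.iterate_succ_apply' (finRotate n).symm, Nat.succ_eq_add_one,
          Nat.sub_add_cancel hL1]
        exact symm_iterate_eq_id n L hLn j
      have h2 : ((finRotate n).symm)^[L-1] j = finRotate n j :=
        (finRotate n).symm.injective (by rw [h1, Equiv.symm_apply_apply])
      show c.2 ((finRotate n) j) = c.2 (((finRotate n).symm : Fin n → Fin n)^[L-1] j)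
      rw [h2]
  have hc'C : c' ∈ C := hc'eq ▸ hiterC (L-1)
  have key := hd c' hc'C
  rw [hT]
  calc (∑ i, (d.1 ∘ ⇑(finRotate m).symm) i * c.1 i)
        + (∑ j, (d.2 ∘ ⇑(finRotate n).symm) j * c.2 j)
      = (∑ i, d.1 i * c'.1 i) + (∑ j, d.2 j * c'.2 j) := by
        congr 1
        · exact Fintype.sum_equiv (finRotate m).symm _ _ (fun i => by simp only [hc', Function.comp_apply, Equiv.apply_symm_apply])
        · exact Fintype.sum_equiv (finRotate n).symm _ _ (fun j => by simp only [hc', Function.comp_apply, Equiv.apply_symm_apply])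
    _ = 0 := key
end

section
/- Let F be a field and m, n, l ≥ 1 with m ∣ l and n ∣ l. Suppose c¹(x), d¹(x) ∈ F[x] (of degree < m) and the identity c¹(x)·ω_{l/m}(x^m)·x^l·d¹*(x) ≡ 0 (mod x^l − 1) holds, where ω_k(y) = Σ_{i=0}^{k-1} yⁱ and d¹* is the reciprocal of d¹. Then c¹(x)·d¹*(x) ≡ 0 (mod x^m − 1). -/
open Polynomial Finset

theorem mod_xl_sub_one_to_mod_xm_sub_one
    (F : Type*) [Field F] (m n l : ℕ) (hm : 1 ≤ m) (hn : 1 ≤ n) (hl : 1 ≤ l)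
    (hml : m ∣ l) (hnl : n ∣ l)
    (c d : Polynomial F) (hc : c.natDegree < m) (hd : d.natDegree < m)
    (h : ((X : F[X]) ^ l - 1) ∣
      c * (∑ i ∈ range (l / m), ((X : F[X]) ^ m) ^ i) * (X : F[X]) ^ l * d.reverse) :
    ((X : F[X]) ^ m - 1) ∣ c * d.reverse := by
  set S : F[X] := ∑ i ∈ range (l / m), ((X : F[X]) ^ m) ^ i with hS
  have key : S * ((X : F[X]) ^ m - 1) = (X : F[X]) ^ l - 1 := by
    rw [hS, geom_sum_mul, ← pow_mul, Nat.mul_div_cancel' hml]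
  have hXl : ((X : F[X]) ^ l - 1) ≠ 0 := by
    have := X_pow_sub_C_ne_zero (n := l) (by omega) (1 : F)
    simpa using this
  have hSne : S ≠ 0 := by
    intro h0
    rw [h0, zero_mul] at key
    exact hXl key.symm
  have h1 : S * ((X : F[X]) ^ m - 1) ∣ S * (c * (X : F[X]) ^ l * d.reverse) := by
    rw [key]
    convert h using 1
    ring
  have h2 : ((X : F[X]) ^ m - 1) ∣ c * (X : F[X]) ^ l * d.reverse :=
    (mul_dvd_mul_iff_left hSne).mp h1
  have hcop : IsCoprime ((X : F[X]) ^ m - 1) ((X : F[X]) ^ l) := by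
    apply IsCoprime.pow_right
    refine ⟨-1, X ^ (m - 1), ?_⟩
    have : (X : F[X]) ^ (m - 1) * X = X ^ m := by
      rw [← pow_succ, Nat.sub_add_cancel hm]
    rw [this]; ring
  have h3 : ((X : F[X]) ^ m - 1) ∣ (c * d.reverse) * (X : F[X]) ^ l := by
    convert h2 using 1; ring
  exact hcop.dvd_of_dvd_mul_right h3
end

section
/- Let F be a field, m, n ≥ 1, and C ⊆ F[x]/⟨x^m−1⟩ × F[x]/⟨x^n−1⟩ an F[x]-submodule (a double cyclic code of length (m,n)). Then there exist polynomials ι(x), ℓ(x) ∈ F[x] and θ(x) ∈ F[x] such that ι(x) ∣ x^m − 1, θ(x) ∣ x^n − 1, and C is generated as an F[x]-module by the two elements (ι(x) | 0) and (ℓ(x) | θ(x)). -/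
open Polynomial

set_option maxHeartbeats 1000000

theorem double_cyclic_generators
    (F : Type*) [Field F] (m n : ℕ) (hm : 1 ≤ m) (hn : 1 ≤ n)
    (C : Submodule F[X]
      ((F[X] ⧸ Ideal.span {(X : F[X]) ^ m - 1}) × (F[X] ⧸ Ideal.span {(X : F[X]) ^ n - 1}))) :
    ∃ ι ℓ θ : F[X], ι ∣ (X : F[X]) ^ m - 1 ∧ θ ∣ (X : F[X]) ^ n - 1 ∧
      C = Submodule.span F[X]
        {(Ideal.Quotient.mk (Ideal.span {(X : F[X]) ^ m - 1}) ι, 0),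
         (Ideal.Quotient.mk (Ideal.span {(X : F[X]) ^ m - 1}) ℓ,
          Ideal.Quotient.mk (Ideal.span {(X : F[X]) ^ n - 1}) θ)} := by
  let Im : Ideal F[X] := Ideal.span {(X : F[X]) ^ m - 1}
  let In : Ideal F[X] := Ideal.span {(X : F[X]) ^ n - 1}
  let mkm := Ideal.Quotient.mk Im
  let mkn := Ideal.Quotient.mk In
  let φ : (F[X] ⧸ Im) × (F[X] ⧸ In) →ₗ[F[X]] F[X] ⧸ In :=
    LinearMap.snd F[X] _ _
  let Jn : Ideal F[X] := (C.map φ).comap (Ideal.Quotient.mkₐ F[X] In).toLinearMap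
  let K : Submodule F[X] (F[X] ⧸ Im) := C.comap (LinearMap.inl F[X] _ _)
  let Jm : Ideal F[X] := K.comap (Ideal.Quotient.mkₐ F[X] Im).toLinearMap
  obtain ⟨θ, hθ⟩ := (IsPrincipalIdealRing.principal Jn).principal
  obtain ⟨ι, hι⟩ := (IsPrincipalIdealRing.principal Jm).principal
  have hJn_mem : ∀ g : F[X], g ∈ Jn ↔ mkn g ∈ C.map φ := fun g => Iff.rfl
  have hJm_mem : ∀ g : F[X], g ∈ Jm ↔ ((mkm g, 0) : _) ∈ C := fun g => Iff.rfl
  -- θ divides x^n - 1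
  have hθdvd : θ ∣ (X : F[X]) ^ n - 1 := by
    have hmem : ((X : F[X]) ^ n - 1) ∈ Jn := by
      rw [hJn_mem]
      have h0 : mkn ((X : F[X]) ^ n - 1) = 0 := by
        exact Ideal.Quotient.eq_zero_iff_mem.mpr (Ideal.subset_span (Set.mem_singleton _))
      rw [h0]; exact Submodule.zero_mem _
    rw [hθ, Submodule.mem_span_singleton] at hmem
    obtain ⟨r, hr⟩ := hmem
    exact ⟨r, by rw [← hr, smul_eq_mul, mul_comm]⟩
  have hιdvd : ι ∣ (X : F[X]) ^ m - 1 := by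
    have hmem : ((X : F[X]) ^ m - 1) ∈ Jm := by
      rw [hJm_mem]
      have h0 : mkm ((X : F[X]) ^ m - 1) = 0 := by
        exact Ideal.Quotient.eq_zero_iff_mem.mpr (Ideal.subset_span (Set.mem_singleton _))
      rw [h0]; exact Submodule.zero_mem _
    rw [hι, Submodule.mem_span_singleton] at hmem
    obtain ⟨r, hr⟩ := hmem
    exact ⟨r, by rw [← hr, smul_eq_mul, mul_comm]⟩
  -- choose ℓ
  have hθJn : θ ∈ Jn := by rw [hθ]; exact Submodule.mem_span_singleton_self θ
  rw [hJn_mem] at hθJn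
  obtain ⟨⟨c1, c2⟩, hcC, hc2⟩ := hθJn
  have hc2' : c2 = mkn θ := hc2
  obtain ⟨ℓ, hℓ⟩ := Ideal.Quotient.mk_surjective (I := Im) c1
  refine ⟨ι, ℓ, θ, hιdvd, hθdvd, ?_⟩
  have hcC' : ((mkm ℓ, mkn θ) : _) ∈ C := by
    have : ((c1, c2) : _) = (mkm ℓ, mkn θ) := by
      rw [Prod.ext_iff]; exact ⟨hℓ.symm, hc2'⟩
    rwa [this] at hcC
  have hsmul_n : ∀ (q a : F[X]), q • mkn a = mkn (q * a) := fun q a => rfl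
  have hsmul_m : ∀ (q a : F[X]), q • mkm a = mkm (q * a) := fun q a => rfl
  apply le_antisymm
  · rintro ⟨a, b⟩ hab
    obtain ⟨g, hg⟩ := Ideal.Quotient.mk_surjective (I := In) b
    have hgJn : g ∈ Jn := by
      rw [hJn_mem]
      exact ⟨(a, b), hab, hg.symm⟩
    rw [hθ, Submodule.mem_span_singleton] at hgJn
    obtain ⟨q, hq⟩ := hgJn
    have hq' : g = q * θ := by rw [← hq, smul_eq_mul]
    have he : ((a, b) - q • (mkm ℓ, mkn θ) : _) ∈ C :=
      Submodule.sub_mem _ hab (Submodule.smul_mem _ _ hcC')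
    have he2 : ((a, b) - q • (mkm ℓ, mkn θ) : _).2 = 0 := by
      show b - q • mkn θ = 0
      rw [hsmul_n, ← hg, ← hq']
      exact sub_self _
    set e1 := ((a, b) - q • (mkm ℓ, mkn θ) : _).1 with he1def
    have heK : ((e1, 0) : _) ∈ C := by
      have : ((a, b) - q • (mkm ℓ, mkn θ) : _) = (e1, 0) := by
        rw [Prod.ext_iff]; exact ⟨rfl, he2⟩
      rwa [this] at he
    obtain ⟨h, hh⟩ := Ideal.Quotient.mk_surjective (I := Im) e1
    have hhJm : h ∈ Jm := by
      rw [hJm_mem]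
      have hh' : mkm h = e1 := hh
      rw [hh']; exact heK
    rw [hι, Submodule.mem_span_singleton] at hhJm
    obtain ⟨p, hp⟩ := hhJm
    have hp' : h = p * ι := by rw [← hp, smul_eq_mul]
    have key : ((a, b) : _) = p • (mkm ι, 0) + q • (mkm ℓ, mkn θ) := by
      have h1 : p • ((mkm ι, 0) : (F[X] ⧸ Im) × (F[X] ⧸ In)) = (e1, 0) := by
        rw [Prod.ext_iff]
        refine ⟨?_, smul_zero p⟩
        show p • mkm ι = e1
        rw [hsmul_m, ← hp', hh]
      rw [h1, Prod.ext_iff]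
      constructor
      · show a = e1 + (q • ((mkm ℓ, mkn θ) : (F[X] ⧸ Im) × (F[X] ⧸ In))).1
        rw [he1def]
        show a = (a - q • mkm ℓ) + q • mkm ℓ
        ring
      · show b = (0 : F[X] ⧸ In) + q • mkn θ
        rw [zero_add, hsmul_n, ← hq', hg]
    rw [key]
    exact Submodule.add_mem _
      (Submodule.smul_mem _ _ (Submodule.subset_span (Set.mem_insert _ _)))
      (Submodule.smul_mem _ _ (Submodule.subset_span (Set.mem_insert_of_mem _ rfl)))
  · rw [Submodule.span_le]
    rintro x (rfl | rfl)
    · have hι' : ι ∈ Jm := by rw [hι]; exact Submodule.mem_span_singleton_self ι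
      rw [hJm_mem] at hι'
      exact hι'
    · exact hcC'
end
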